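/- arXiv:1803.07214 — 3 statements merged into one kernel-verified Lean document; each statement's English description precedes it below -/
import Mathlib

section
/- Let k be a field, V a nonzero k-vector space, X a subset of End_k(V), and R the nonunital k-subalgebra of End_k(V) generated by X. If X is topologically nilpotent, then R is topologically nilpotent. -/
variable {k : Type*} [Field k]

/-- `seqProd f n = f (n-1) * ⋯ * f 1 * f 0`, the composition `Tₙ ⋯ T₂ T₁` of the first `n`
terms of the sequence `f` (and the identity for `n = 0`). -/
def seqProd {V : Type*} [AddCommGroup V] [Module k V]
    (f : ℕ → Module.End k V) : ℕ → Module.End k V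
  | 0 => 1
  | n + 1 => f n * seqProd f n

/-- A subset `X ⊆ End_k(V)` is topologically nilpotent if for every sequence of elements of
`X` and every finite-dimensional subspace `W` of `V`, some initial composition
`Tₙ ⋯ T₂ T₁` annihilates `W`. -/
def IsTopNilpotentSet {V : Type*} [AddCommGroup V] [Module k V]
    (X : Set (Module.End k V)) : Prop :=
  ∀ f : ℕ → Module.End k V, (∀ n, f n ∈ X) →
    ∀ W : Submodule k V, FiniteDimensional k ↥W →
      ∃ n : ℕ, 0 < n ∧ ∀ w ∈ W, seqProd f n w = 0

section Aux

variable {V : Type*} [AddCommGroup V] [Module k V]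

lemma seqProd_succ' (f : ℕ → Module.End k V) (n : ℕ) :
    seqProd (k := k) f (n + 1) = f n * seqProd f n := rfl

lemma seqProd_congr {f g : ℕ → Module.End k V} {n : ℕ} (h : ∀ j < n, f j = g j) :
    seqProd (k := k) f n = seqProd g n := by
  induction n with
  | zero => rfl
  | succ n ih =>
      rw [seqProd_succ', seqProd_succ', ih fun j hj => h j (hj.trans (Nat.lt_succ_self n)),
        h n (Nat.lt_succ_self n)]

lemma seqProd_apply_zero_mono {f : ℕ → Module.End k V} {n m : ℕ} (hnm : n ≤ m) {w : V}
    (h : seqProd (k := k) f n w = 0) : seqProd f m w = 0 := by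
  induction m, hnm using Nat.le_induction with
  | base => exact h
  | succ m hm ih =>
      rw [seqProd_succ', Module.End.mul_apply, ih, map_zero]

/-- Products of nonempty lists of elements of `s` exhaust `Subsemigroup.closure s`. -/
lemma exists_list_of_mem_sclosure {M : Type*} [Monoid M] {s : Set M} {x : M}
    (hx : x ∈ Subsemigroup.closure s) :
    ∃ l : List M, l ≠ [] ∧ (∀ T ∈ l, T ∈ s) ∧ l.prod = x := by
  induction hx using Subsemigroup.closure_induction with
  | mem x hxs => exact ⟨[x], by simp, by simpa using hxs, by simp⟩
  | mul x y hx hy hpx hpy =>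
      obtain ⟨l₁, hne₁, hmem₁, hp₁⟩ := hpx
      obtain ⟨l₂, hne₂, hmem₂, hp₂⟩ := hpy
      refine ⟨l₁ ++ l₂, by simp [hne₁], ?_, by rw [List.prod_append, hp₁, hp₂]⟩
      intro T hT
      rcases List.mem_append.mp hT with h | h
      · exact hmem₁ T h
      · exact hmem₂ T h

/-- König-type lemma: if `X` is topologically nilpotent and `Z j ⊆ X` are finite
position-dependent alphabets, then some uniform length `N` works for all constrained words. -/
lemma konig_step (X : Set (Module.End k V)) (hX : IsTopNilpotentSet X)
    (Z : ℕ → Set (Module.End k V)) (hZfin : ∀ j, (Z j).Finite) (hZX : ∀ j, Z j ⊆ X)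
    (W : Submodule k V) (hW : FiniteDimensional k ↥W) :
    ∃ N : ℕ, 0 < N ∧ ∀ g : ℕ → Module.End k V, (∀ j < N, g j ∈ Z j) →
      ∀ w ∈ W, seqProd g N w = 0 := by
  by_contra hcon
  push_neg at hcon
  set Bad :=
    fun (n:ℕ) (g : ℕ → Module.End k V) => (∀ j < n, g j ∈ Z j) ∧ ∃ w ∈ W, seqProd g n w ≠ 0 with hBad
  have badMono : ∀ {n m : ℕ} {g}, n ≤ m → Bad m g → Bad n g := by
    rintro n m g hnm ⟨hc, w, hw, hne⟩
    exact ⟨fun j hj => hc j (lt_of_lt_of_le hj hnm), w, hw,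
      fun h0 => hne (seqProd_apply_zero_mono hnm h0)⟩
  set Ext :=
    fun (n:ℕ) (g : ℕ → Module.End k V) => ∀ m : ℕ, ∃ g', (∀ j < n, g' j = g j) ∧ Bad (n + m + 1) g' with hExt
  have ext0 : ∀ g, Ext 0 g := by
    intro g m
    obtain ⟨g', hg', w, hw, hne⟩ := hcon (m + 1) (Nat.succ_pos m)
    exact ⟨g', fun j hj => absurd hj (Nat.not_lt_zero j), by simpa using ⟨hg', w, hw, hne⟩⟩
  have step : ∀ n g, Ext n g → ∃ T, T ∈ Z n ∧ Ext (n + 1) (Function.update g n T) := by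
    intro n g h
    choose c hagree hbad using h
    have hcn : ∀ m, c m n ∈ Z n := fun m => (hbad m).1 n (by omega)
    haveI : Finite (Z n) := (hZfin n).to_subtype
    obtain ⟨y, hy⟩ := Finite.exists_infinite_fiber (fun m : ℕ => (⟨c m n, hcn m⟩ : Z n))
    have hyinf : ((fun m : ℕ => (⟨c m n, hcn m⟩ : Z n)) ⁻¹' {y}).Infinite :=
      Set.infinite_coe_iff.mp hy
    refine ⟨y.1, y.2, ?_⟩
    intro m
    obtain ⟨m', hm'mem, hm'gt⟩ := hyinf.exists_gt m
    have hval : c m' n = y.1 := congrArg Subtype.val hm'mem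
    refine ⟨c m', ?_, ?_⟩
    · intro j hj
      rcases Nat.lt_succ_iff_lt_or_eq.mp hj with hj' | rfl
      · rw [hagree m' j hj', Function.update_of_ne (Nat.ne_of_lt hj')]
      · rw [hval, Function.update_self]
    · exact badMono (by omega) (hbad m')
  choose T hTZ hTExt using step
  let G : ∀ n : ℕ, {g : ℕ → Module.End k V // Ext n g} := fun n =>
    Nat.rec ⟨fun _ => 0, ext0 _⟩
      (fun n p => ⟨Function.update p.1 n (T n p.1 p.2), hTExt n p.1 p.2⟩) n
  have hGsucc : ∀ n, (G (n + 1)).1 = Function.update (G n).1 n (T n (G n).1 (G n).2) :=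
    fun n => rfl
  set f : ℕ → Module.End k V := fun j => (G (j + 1)).1 j with hfdef
  have hfZ : ∀ j, f j ∈ Z j := by
    intro j
    show (G (j + 1)).1 j ∈ Z j
    rw [hGsucc, Function.update_self]
    exact hTZ _ _ _
  have hagree : ∀ n, ∀ j < n, (G n).1 j = f j := by
    intro n
    induction n with
    | zero => intro j hj; exact absurd hj (Nat.not_lt_zero j)
    | succ n ih =>
        intro j hj
        rcases Nat.lt_succ_iff_lt_or_eq.mp hj with hj' | rfl
        · rw [hGsucc, Function.update_of_ne (Nat.ne_of_lt hj')]
          exact ih j hj'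
        · rfl
  have hbadf : ∀ n, ∃ w ∈ W, seqProd f n w ≠ 0 := by
    intro n
    obtain ⟨g', hg'agree, hbad'⟩ := (G n).2 0
    obtain ⟨_, w, hw, hne⟩ := badMono (show n ≤ n + 0 + 1 by omega) hbad'
    refine ⟨w, hw, ?_⟩
    rwa [seqProd_congr (f := f) (g := g')
      fun j hj => ((hg'agree j hj).trans (hagree n j hj)).symm]
  obtain ⟨n, hn0, hkill⟩ := hX f (fun j => hZX j (hfZ j)) W hW
  obtain ⟨w, hw, hne⟩ := hbadf n
  exact hne (hkill w hw)

/-- Extending a constrained word by a list of letters from `Ysub ⊆ Z j` (for `j ≥ n`). -/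
lemma extend_word (Z : ℕ → Set (Module.End k V)) (Ysub : Set (Module.End k V)) (n : ℕ)
    (hY : ∀ j, n ≤ j → Ysub ⊆ Z j) :
    ∀ l : List (Module.End k V), (∀ T ∈ l, T ∈ Ysub) →
      ∀ (g : ℕ → Module.End k V) (m : ℕ), n ≤ m → (∀ j < m, g j ∈ Z j) →
        ∃ g', (∀ j < m + l.length, g' j ∈ Z j) ∧
          seqProd (k := k) g' (m + l.length) = l.prod * seqProd g m := by
  intro l
  induction l with
  | nil =>
      intro _ g m hnm hg
      exact ⟨g, by simpa using hg, by simp⟩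
  | cons a l ih =>
      intro hmem g m hnm hg
      obtain ⟨g₁, hg₁, hprod⟩ := ih (fun T hT => hmem T (List.mem_cons_of_mem a hT)) g m hnm hg
      refine ⟨Function.update g₁ (m + l.length) a, ?_, ?_⟩
      · intro j hj
        have hj' : j < m + l.length + 1 := by simpa [List.length_cons, Nat.add_assoc] using hj
        rcases Nat.lt_succ_iff_lt_or_eq.mp hj' with h | rfl
        · rw [Function.update_of_ne (Nat.ne_of_lt h)]
          exact hg₁ j h
        · rw [Function.update_self]
          exact hY _ (by omega) (hmem a ((List.mem_cons_self (a := a) (l := l))))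
      · have hlen : m + (a :: l).length = (m + l.length) + 1 := by
          simp [List.length_cons, Nat.add_assoc]
        rw [hlen, seqProd_succ', Function.update_self,
          seqProd_congr (f := Function.update g₁ (m + l.length) a) (g := g₁)
            (fun j hj => Function.update_of_ne (Nat.ne_of_lt hj) _ _),
          hprod, List.prod_cons, mul_assoc]

end Aux

/-- if `X ⊆ End_k(V)` is topologically nilpotent, then so is the nonunital
`k`-subalgebra of `End_k(V)` generated by `X`. -/
theorem stmt_7 {V : Type*} [AddCommGroup V] [Module k V] [Nontrivial V]
    (X : Set (Module.End k V)) (hX : IsTopNilpotentSet X) :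
    IsTopNilpotentSet
      ((NonUnitalAlgebra.adjoin k X : NonUnitalSubalgebra k (Module.End k V)) :
        Set (Module.End k V)) := by
  intro f hf W hW
  -- step 1: represent each `f n` as a linear combination of words
  have hf' : ∀ n, f n ∈ Submodule.span k (Subsemigroup.closure X : Set (Module.End k V)) := by
    intro n
    have h1 : f n ∈ (NonUnitalAlgebra.adjoin k X).toSubmodule := hf n
    rwa [NonUnitalAlgebra.adjoin_eq_span] at h1
  choose c hsupp hsum using fun n => Submodule.mem_span_set.mp (hf' n)
  have hword : ∀ p : Module.End k V, ∃ l : List (Module.End k V), p ∈ Subsemigroup.closure X →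
      l ≠ [] ∧ (∀ T ∈ l, T ∈ X) ∧ l.prod = p := by
    intro p
    by_cases h : p ∈ Subsemigroup.closure X
    · exact (exists_list_of_mem_sclosure h).imp fun l hl _ => hl
    · exact ⟨[], fun hc => absurd hc h⟩
  choose L hL using hword
  set Y : ℕ → Set (Module.End k V) := fun n => ⋃ p ∈ ((c n).support : Set (Module.End k V)), {T | T ∈ L p} with hYdef
  set Z : ℕ → Set (Module.End k V) := fun j => ⋃ i ∈ Set.Iic j, Y i with hZdef
  have hYfin : ∀ n, (Y n).Finite :=
    fun n => Set.Finite.biUnion ((c n).support.finite_toSet) fun p _ => (L p).finite_toSet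
  have hZfin : ∀ j, (Z j).Finite :=
    fun j => Set.Finite.biUnion (Set.finite_Iic j) fun i _ => hYfin i
  have hYX : ∀ n, Y n ⊆ X := by
    intro n T hT
    simp only [hYdef, Set.mem_iUnion, Set.mem_setOf_eq] at hT
    obtain ⟨p, hp, hTp⟩ := hT
    exact (hL p (hsupp n hp)).2.1 T hTp
  have hZX : ∀ j, Z j ⊆ X := by
    intro j T hT
    simp only [hZdef, Set.mem_iUnion] at hT
    obtain ⟨i, _, hTi⟩ := hT
    exact hYX i hTi
  have hYZ : ∀ n j, n ≤ j → Y n ⊆ Z j := by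
    intro n j hnj T hT
    simp only [hZdef, Set.mem_iUnion]
    exact ⟨n, hnj, hT⟩
  -- step 2: the uniform-kill length from the König argument
  obtain ⟨N, hN0, hNkill⟩ := konig_step X hX Z hZfin hZX W hW
  -- step 3: `seqProd f n` maps `W` into the span of constrained-word images
  set S : ℕ → Set V := fun n =>
    {v | ∃ m, n ≤ m ∧ ∃ g : ℕ → Module.End k V, (∀ j < m, g j ∈ Z j) ∧ ∃ w ∈ W, seqProd g m w = v}
    with hSdef
  have claim : ∀ n, ∀ w ∈ W, seqProd f n w ∈ Submodule.span k (S n) := by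
    intro n
    induction n with
    | zero =>
        intro w hw
        apply Submodule.subset_span
        exact ⟨0, le_refl 0, fun _ => 0, fun j hj => absurd hj (Nat.not_lt_zero j),
          w, hw, rfl⟩
    | succ n ih =>
        intro w hw
        have key : Submodule.map (f n) (Submodule.span k (S n)) ≤
            Submodule.span k (S (n + 1)) := by
          rw [Submodule.map_span]
          apply Submodule.span_le.mpr
          rintro _ ⟨v, hv, rfl⟩
          obtain ⟨m, hnm, g, hg, w', hw', hvw⟩ := hv
          have happ : (f n) v = (c n).sum fun p r => r • (p v) := by
            rw [← hsum n, Finsupp.sum, Finsupp.sum, LinearMap.sum_apply]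
            simp
          rw [happ]
          apply Submodule.sum_mem
          intro p hp
          apply Submodule.smul_mem
          apply Submodule.subset_span
          have hpcl : p ∈ Subsemigroup.closure X := hsupp n hp
          obtain ⟨hne, hmemX, hprodp⟩ := hL p hpcl
          have hmemY : ∀ T ∈ L p, T ∈ Y n := by
            intro T hT
            simp only [hYdef, Set.mem_iUnion, Set.mem_setOf_eq]
            exact ⟨p, hp, hT⟩
          obtain ⟨g', hg', hprod⟩ :=
            extend_word Z (Y n) n (fun j hj => hYZ n j hj) (L p) hmemY g m hnm hg
          have hlen : 0 < (L p).length := List.length_pos_iff.mpr hne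
          refine ⟨m + (L p).length, by omega, g', hg', w', hw', ?_⟩
          rw [hprod, Module.End.mul_apply, hvw, hprodp]
        have h1 : seqProd f (n + 1) w = (f n) (seqProd f n w) := rfl
        rw [h1]
        exact key ⟨seqProd f n w, ih w hw, rfl⟩
  -- step 4: conclude
  refine ⟨N, hN0, fun w hw => ?_⟩
  have hS0 : Submodule.span k (S N) ≤ ⊥ := by
    apply Submodule.span_le.mpr
    rintro v ⟨m, hNm, g, hg, w', hw', rfl⟩
    simp only [SetLike.mem_coe, Submodule.mem_bot]
    exact seqProd_apply_zero_mono hNm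
      (hNkill g (fun j hj => hg j (lt_of_lt_of_le hj hNm)) w' hw')
  simpa using hS0 (claim N w hw)
end

section
/- Let k be a field, V a nonzero k-vector space, and R a subring of End_k(V) (containing the identity) that is triangular with respect to a well-ordered basis (B, ≤) of V. Then TNil(R), the set of topologically nilpotent elements of R, is a topologically nilpotent set. -/
variable {k : Type*} [Field k]

section Aux
variable {V : Type*} [AddCommGroup V] [Module k V]

lemma seqProd_shift (f : ℕ → Module.End k V) (s : ℕ) :
    ∀ n, seqProd (fun m => f (s + m)) (n + 1) =
      seqProd (fun m => f (s + 1 + m)) n * f s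
  | 0 => by simp [seqProd]
  | n + 1 => by
    show f (s + (n+1)) * seqProd (fun m => f (s + m)) (n+1) = _
    rw [seqProd_shift f s n]
    show _ = f (s + 1 + n) * seqProd (fun m => f (s+1+m)) n * f s
    rw [← mul_assoc, show s + (n+1) = s + 1 + n by omega]

lemma seqProd_zero_mono (f : ℕ → Module.End k V) {x : V} {n : ℕ}
    (h : seqProd f n x = 0) : ∀ {m}, n ≤ m → seqProd f m x = 0 := by
  intro m hm
  induction m with
  | zero => exact (Nat.le_zero.mp hm ▸ h)
  | succ m ih =>
    rcases Nat.lt_or_ge n (m+1) with h' | h'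
    · have := ih (by omega)
      show f m (seqProd f m x) = 0
      rw [this, map_zero]
    · have : n = m + 1 := by omega
      exact this ▸ h

end Aux

section Tri
variable {V : Type*} [AddCommGroup V] [Module k V]
variable {ι : Type*} [LinearOrder ι] {b : Module.Basis ι k V} {R : Subring (Module.End k V)}

lemma tri_map
    (htri : ∀ T ∈ R, ∀ i : ι, T (b i) ∈ Submodule.span k (⇑b '' {j | j ≤ i}))
    {T : Module.End k V} (hT : T ∈ R) {S : Set ι}
    (hS : ∀ j ∈ S, ∀ l, l ≤ j → l ∈ S) {x : V}
    (hx : x ∈ Submodule.span k (⇑b '' S)) : T x ∈ Submodule.span k (⇑b '' S) := by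
  have hle : Submodule.span k (⇑b '' S) ≤ (Submodule.span k (⇑b '' S)).comap T := by
    rw [Submodule.span_le]
    rintro _ ⟨j, hj, rfl⟩
    exact Submodule.span_mono (Set.image_mono (fun l hl => hS j hj l hl)) (htri T hT j)
  exact hle hx

lemma tri_coeff
    (htri : ∀ T ∈ R, ∀ i : ι, T (b i) ∈ Submodule.span k (⇑b '' {j | j ≤ i}))
    {T : Module.End k V} (hT : T ∈ R) (i : ι) {x : V}
    (hx : x ∈ Submodule.span k (⇑b '' {j | j ≤ i})) :
    b.repr (T x) i = b.repr x i * b.repr (T (b i)) i := by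
  set a := b.repr x i with ha
  have hy : x - a • b i ∈ Submodule.span k (⇑b '' {j | j < i}) := by
    rw [Module.Basis.mem_span_image]
    intro j hj
    simp only [Finset.mem_coe, Finsupp.mem_support_iff, map_sub, map_smul,
      Module.Basis.repr_self, Finsupp.sub_apply, Finsupp.smul_apply] at hj
    rcases eq_or_ne j i with rfl | hne
    · simp [← ha] at hj
    · have hji : j ≤ i := by
        have := ((Module.Basis.mem_span_image b).mp hx)
        by_contra hnot
        rcases eq_or_ne (b.repr x j) 0 with h0 | h0
        · simp [h0, Finsupp.single_apply, Ne.symm hne] at hj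
        · exact hnot (this (by simpa [Finsupp.mem_support_iff] using h0))
      exact lt_of_le_of_ne hji hne
  have hTy : T (x - a • b i) ∈ Submodule.span k (⇑b '' {j | j < i}) :=
    tri_map htri hT (fun j hj l hl => lt_of_le_of_lt hl hj) hy
  have h0 : b.repr (T (x - a • b i)) i = 0 := by
    have := (Module.Basis.mem_span_image b).mp hTy
    by_contra h
    exact absurd (this (by simpa [Finsupp.mem_support_iff] using h)) (by simp)
  have hx' : T x = a • T (b i) + T (x - a • b i) := by
    rw [← map_smul, ← map_add]; congr 1; abel
  rw [hx', map_add, map_smul, Finsupp.add_apply, Finsupp.smul_apply, h0, add_zero,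
    smul_eq_mul]

end Tri

section Tri2
variable {V : Type*} [AddCommGroup V] [Module k V]
variable {ι : Type*} [LinearOrder ι] {b : Module.Basis ι k V} {R : Subring (Module.End k V)}

lemma tri_pow_coeff
    (htri : ∀ T ∈ R, ∀ i : ι, T (b i) ∈ Submodule.span k (⇑b '' {j | j ≤ i}))
    {T : Module.End k V} (hT : T ∈ R) (i : ι) (m : ℕ) :
    (T ^ m) (b i) ∈ Submodule.span k (⇑b '' {j | j ≤ i}) ∧
      b.repr ((T ^ m) (b i)) i = (b.repr (T (b i)) i) ^ m := by
  induction m with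
  | zero =>
    constructor
    · simpa using Submodule.subset_span ⟨i, le_refl i, rfl⟩
    · simp [Module.Basis.repr_self]
  | succ m ih =>
    obtain ⟨h1, h2⟩ := ih
    have hstep : (T ^ (m + 1)) (b i) = T ((T ^ m) (b i)) := by
      rw [pow_succ', Module.End.mul_apply]
    constructor
    · rw [hstep]
      exact tri_map htri hT (fun j hj l hl => le_trans hl hj) h1
    · rw [hstep, tri_coeff htri hT i h1, h2, pow_succ]

lemma tri_key
    (htri : ∀ T ∈ R, ∀ i : ι, T (b i) ∈ Submodule.span k (⇑b '' {j | j ≤ i}))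
    {T : Module.End k V} (hT : T ∈ R)
    (htn : ∀ v : V, ∃ m : ℕ, 0 < m ∧ (T ^ m) v = 0) (i : ι) :
    T (b i) ∈ Submodule.span k (⇑b '' {j | j < i}) := by
  obtain ⟨m, hm, h0⟩ := htn (b i)
  have hc : (b.repr (T (b i)) i) ^ m = 0 := by
    rw [← (tri_pow_coeff htri hT i m).2, h0, map_zero, Finsupp.zero_apply]
  have hc0 : b.repr (T (b i)) i = 0 := pow_eq_zero_iff hm.ne' |>.mp hc
  have h1 := (Module.Basis.mem_span_image b).mp (htri T hT i)
  rw [Module.Basis.mem_span_image]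
  intro j hj
  have hji : j ≤ i := h1 hj
  have hne : j ≠ i := by
    rintro rfl
    exact absurd hc0 (by simpa [Finsupp.mem_support_iff] using hj)
  exact lt_of_le_of_ne hji hne

end Tri2

section Main
variable {V : Type*} [AddCommGroup V] [Module k V]
variable {ι : Type*} [LinearOrder ι] [WellFoundedLT ι] {b : Module.Basis ι k V}
variable {R : Subring (Module.End k V)}

lemma main_ind
    (htri : ∀ T ∈ R, ∀ i : ι, T (b i) ∈ Submodule.span k (⇑b '' {j | j ≤ i}))
    (f : ℕ → Module.End k V)
    (hf : ∀ n, f n ∈ R ∧ ∀ v : V, ∃ m : ℕ, 0 < m ∧ ((f n) ^ m) v = 0) :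
    ∀ i : ι, ∀ s : ℕ, ∃ n, seqProd (fun m => f (s + m)) n (b i) = 0 := by
  intro i
  induction i using WellFoundedLT.induction with
  | ind i IH =>
    intro s
    classical
    have hx : f s (b i) ∈ Submodule.span k (⇑b '' {j | j < i}) :=
      tri_key htri (hf s).1 (hf s).2 i
    set x := f s (b i) with hxdef
    have hsupp : ↑(b.repr x).support ⊆ {j | j < i} := (Module.Basis.mem_span_image b).mp hx
    have hchoice : ∀ j : ι, ∃ n, j ∈ (b.repr x).support →
        seqProd (fun m => f (s + 1 + m)) n (b j) = 0 := by
      intro j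
      by_cases hj : j ∈ (b.repr x).support
      · obtain ⟨n, hn⟩ := IH j (hsupp hj) (s + 1)
        exact ⟨n, fun _ => hn⟩
      · exact ⟨0, fun h => absurd h hj⟩
    choose g hg using hchoice
    set N := (b.repr x).support.sup g with hN
    have hz : ∀ j ∈ (b.repr x).support, seqProd (fun m => f (s + 1 + m)) N (b j) = 0 :=
      fun j hj => seqProd_zero_mono _ (hg j hj) (Finset.le_sup hj)
    refine ⟨N + 1, ?_⟩
    rw [seqProd_shift, Module.End.mul_apply, ← hxdef]
    have hrep : x = (b.repr x).sum fun j c => c • b j := by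
      conv_lhs => rw [← b.linearCombination_repr x]
      rw [Finsupp.linearCombination_apply]
    rw [hrep, map_finsuppSum, Finsupp.sum]
    exact Finset.sum_eq_zero fun j hj => by rw [map_smul, hz j hj, smul_zero]

end Main

/-- if `R` is a unital subring of `End_k(V)` triangular with respect to a
well-ordered basis `(B, ≤)`, then `TNil(R)`, the set of topologically nilpotent elements
of `R`, is a topologically nilpotent set. -/
theorem stmt_10 {V : Type*} [AddCommGroup V] [Module k V] [Nontrivial V]
    (R : Subring (Module.End k V))
    {ι : Type*} [LinearOrder ι] [WellFoundedLT ι] (b : Module.Basis ι k V)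
    (htri : ∀ T ∈ R, ∀ i : ι, T (b i) ∈ Submodule.span k (⇑b '' {j | j ≤ i})) :
    IsTopNilpotentSet
      {T : Module.End k V | T ∈ R ∧ ∀ v : V, ∃ m : ℕ, 0 < m ∧ (T ^ m) v = 0} := by
  intro f hf W hW
  classical
  obtain ⟨S, hS⟩ := (Submodule.fg_iff_finiteDimensional W).mpr hW
  set F : Finset ι := S.sup fun v => (b.repr v).support with hF
  have hmain : ∀ i : ι, ∃ n, seqProd f n (b i) = 0 := by
    intro i
    obtain ⟨n, hn⟩ := main_ind htri f hf i 0
    simp only [Nat.zero_add] at hn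
    exact ⟨n, hn⟩
  have hchoice : ∀ i : ι, ∃ n, seqProd f n (b i) = 0 := hmain
  choose g hg using hchoice
  refine ⟨F.sup g + 1, Nat.succ_pos _, ?_⟩
  intro w hw
  have hker : W ≤ LinearMap.ker (seqProd f (F.sup g + 1)) := by
    rw [← hS, Submodule.span_le]
    intro v hv
    rw [SetLike.mem_coe, LinearMap.mem_ker]
    have hrep : v = (b.repr v).sum fun j c => c • b j := by
      conv_lhs => rw [← b.linearCombination_repr v]
      rw [Finsupp.linearCombination_apply]
    rw [hrep, map_finsuppSum, Finsupp.sum]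
    refine Finset.sum_eq_zero fun j hj => ?_
    rw [map_smul, seqProd_zero_mono f (hg j) (Nat.le_succ_of_le ?_), smul_zero]
    have hjF : j ∈ F := by
      have := Finset.le_sup (f := fun v => (b.repr v).support) (Finset.mem_coe.mp hv)
      exact this hj
    exact Finset.le_sup hjF
  exact LinearMap.mem_ker.mp (hker hw)
end

section
/- Let k be a field, V a nonzero k-vector space, and R a unital k-subalgebra of End_k(V) that is triangular with respect to a well-ordered basis (B, ≤) of V. Define φ: R → k^B by φ(T) = (a_v)_{v∈B}, where a_v is the coefficient of v in the expansion of T(v) in the basis B. Then φ is a k-algebra homomorphism that is continuous (for the function topology on R and the product topology on k^B with k discrete), its kernel equals TNil(R), and consequently R/TNil(R) is commutative and TNil(R) is closed in R. -/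
universe u v w

variable {k : Type u} [Field k]

/-- The function (finite/pointwise) topology on `End_k(V)`: the topology induced from the
product topology on `V → V` where `V` carries the discrete topology. -/
instance endFunctionTopology {V : Type v} [AddCommGroup V] [Module k V] :
    TopologicalSpace (Module.End k V) :=
  TopologicalSpace.induced (fun T => (T : V → V))
    (@Pi.topologicalSpace V (fun _ => V) (fun _ => ⊥))

/-- The product topology on `Ω → k` where each factor `k` is discrete. -/
def discretePiTopology (Ω K : Type*) : TopologicalSpace (Ω → K) :=
  @Pi.topologicalSpace Ω (fun _ => K) (fun _ => ⊥)

section helpers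

variable {V : Type v} [AddCommGroup V] [Module k V]
  {ι : Type w} [LinearOrder ι] (b : Module.Basis ι k V)

lemma aux_repr_zero {x : V} {i j : ι}
    (hx : x ∈ Submodule.span k (⇑b '' {l | l ≤ i})) (hij : i < j) :
    b.repr x j = 0 := by
  rw [Module.Basis.mem_span_image] at hx
  by_contra h
  exact absurd (hx (Finsupp.mem_support_iff.mpr h)) (not_le.mpr hij)

lemma aux_mem_span_lt {x : V} {i : ι}
    (hx : x ∈ Submodule.span k (⇑b '' {l | l ≤ i})) (h0 : b.repr x i = 0) :
    x ∈ Submodule.span k (⇑b '' {l | l < i}) := by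
  rw [Module.Basis.mem_span_image] at hx ⊢
  intro j hj
  rcases lt_or_eq_of_le (hx hj) with h | h
  · exact h
  · exact absurd (Finsupp.mem_support_iff.mp hj) (by rw [h]; exact fun hc => hc h0)

lemma aux_stable {T : Module.End k V}
    (hT : ∀ i : ι, T (b i) ∈ Submodule.span k (⇑b '' {j | j ≤ i}))
    {i : ι} {x : V} (hx : x ∈ Submodule.span k (⇑b '' {j | j ≤ i})) :
    T x ∈ Submodule.span k (⇑b '' {j | j ≤ i}) := by
  induction hx using Submodule.span_induction with
  | mem y hy =>
      obtain ⟨j, hj, rfl⟩ := hy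
      exact Submodule.span_mono
        (Set.image_mono fun l (hl : l ≤ j) => le_trans hl hj) (hT j)
  | zero => simp
  | add y z _ _ hy hz => rw [map_add]; exact add_mem hy hz
  | smul c y _ hy => rw [map_smul]; exact Submodule.smul_mem _ _ hy

lemma aux_mul {T : Module.End k V}
    (hT : ∀ i : ι, T (b i) ∈ Submodule.span k (⇑b '' {j | j ≤ i}))
    {i : ι} {x : V} (hx : x ∈ Submodule.span k (⇑b '' {j | j ≤ i})) :
    b.repr (T x) i = b.repr (T (b i)) i * b.repr x i := by
  induction hx using Submodule.span_induction with
  | mem y hy =>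
      obtain ⟨j, hj, rfl⟩ := hy
      rcases eq_or_lt_of_le (hj : j ≤ i) with rfl | hlt
      · simp
      · rw [aux_repr_zero b (hT j) hlt, Module.Basis.repr_self_apply, if_neg hlt.ne, mul_zero]
  | zero => simp
  | add y z _ _ hy hz => simp [mul_add, hy, hz]
  | smul c y _ hy =>
      simp only [map_smul, Finsupp.smul_apply, hy, smul_eq_mul]
      ring

end helpers

/-- if `R` is a unital `k`-subalgebra of `End_k(V)` triangular with respect
to a well-ordered basis `(B, ≤)`, then the map `φ : R → k^B` reading off the diagonal
coefficients is a continuous `k`-algebra homomorphism whose kernel is `TNil(R)`;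
consequently `R/TNil(R)` is commutative (commutators lie in `TNil(R)`) and `TNil(R)` is
closed in `R`. -/
theorem stmt_15 {V : Type v} [AddCommGroup V] [Module k V] [Nontrivial V]
    (R : Subalgebra k (Module.End k V))
    {ι : Type w} [LinearOrder ι] [WellFoundedLT ι] (b : Module.Basis ι k V)
    (htri : ∀ T ∈ R, ∀ i : ι, T (b i) ∈ Submodule.span k (⇑b '' {j | j ≤ i})) :
    ∃ Φ : R →ₐ[k] (ι → k),
      (∀ (T : R) (i : ι), Φ T i = b.repr ((T : Module.End k V) (b i)) i) ∧
      (@Continuous ↥R (ι → k) inferInstance (discretePiTopology ι k) ⇑Φ) ∧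
      (∀ T : R, Φ T = 0 ↔
        ∀ v : V, ∃ m : ℕ, 0 < m ∧ ((T : Module.End k V) ^ m) v = 0) ∧
      (∀ T S : R,
        ∀ v : V, ∃ m : ℕ, 0 < m ∧ (((T * S - S * T : R) : Module.End k V) ^ m) v = 0) ∧
      IsClosed {T : R | ∀ v : V, ∃ m : ℕ, 0 < m ∧ ((T : Module.End k V) ^ m) v = 0} := by
  classical
  -- powers lemma
  have hA : ∀ T ∈ R, ∀ i : ι, ∀ m : ℕ,
      ((T : Module.End k V) ^ m) (b i) ∈ Submodule.span k (⇑b '' {j | j ≤ i}) ∧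
      b.repr (((T : Module.End k V) ^ m) (b i)) i = (b.repr (T (b i)) i) ^ m := by
    intro T hT i m
    induction m with
    | zero =>
        refine ⟨?_, by simp⟩
        simp only [pow_zero, Module.End.one_apply]
        exact (b.self_mem_span_image (s := {j | j ≤ i})).mpr (le_refl i)
    | succ n ih =>
        have h1 : (T ^ (n + 1)) (b i) = T ((T ^ n) (b i)) := by
          rw [pow_succ', Module.End.mul_apply]
        refine ⟨?_, ?_⟩
        · rw [h1]; exact aux_stable b (htri T hT) ih.1
        · rw [h1, aux_mul b (htri T hT) ih.1, ih.2, ← pow_succ']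
  have hstep : ∀ (f : Module.End k V) (v : V) (m l : ℕ),
      (f ^ m) v = 0 → m ≤ l → (f ^ l) v = 0 := by
    intro f v m l h hml
    obtain ⟨d, rfl⟩ := Nat.exists_eq_add_of_le hml
    rw [add_comm, pow_add, Module.End.mul_apply, h, map_zero]
  -- kernel, forward direction
  have hker_fwd : ∀ T : R, (∀ i, b.repr ((T : Module.End k V) (b i)) i = 0) →
      ∀ v : V, ∃ m, 0 < m ∧ ((T : Module.End k V) ^ m) v = 0 := by
    intro T h0 v
    set f := (T : Module.End k V) with hf
    let W : Submodule k V :=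
      { carrier := {w | ∃ m, (f ^ m) w = 0}
        add_mem' := by
          rintro x y ⟨m, hm⟩ ⟨n, hn⟩
          exact ⟨m + n, by
            rw [map_add, hstep f x m (m + n) hm (Nat.le_add_right _ _),
              hstep f y n (m + n) hn (Nat.le_add_left _ _), add_zero]⟩
        zero_mem' := ⟨0, by simp⟩
        smul_mem' := by
          rintro c x ⟨m, hm⟩
          exact ⟨m, by rw [map_smul, hm, smul_zero]⟩ }
    have hb : ∀ i : ι, b i ∈ W := by
      intro i
      refine WellFoundedLT.induction (motive := fun i => b i ∈ W) i ?_
      intro i IH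
      have h1 : f (b i) ∈ Submodule.span k (⇑b '' {l | l < i}) :=
        aux_mem_span_lt b (htri f T.2 i) (h0 i)
      have h2 : f (b i) ∈ W := by
        refine Submodule.span_le.mpr ?_ h1
        rintro y ⟨j, hj, rfl⟩
        exact IH j hj
      obtain ⟨m, hm⟩ := h2
      exact ⟨m + 1, by rw [pow_succ, Module.End.mul_apply, hm]⟩
    have hv : v ∈ W := by
      have h3 : v ∈ Submodule.span k (Set.range ⇑b) := by
        rw [b.span_eq]; trivial
      refine Submodule.span_le.mpr ?_ h3
      rintro y ⟨i, rfl⟩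
      exact hb i
    obtain ⟨m, hm⟩ := hv
    exact ⟨m + 1, Nat.succ_pos m, hstep f v m (m + 1) hm (Nat.le_succ m)⟩
  -- kernel, backward direction
  have hker_bwd : ∀ T : R, (∀ v : V, ∃ m, 0 < m ∧ ((T : Module.End k V) ^ m) v = 0) →
      ∀ i, b.repr ((T : Module.End k V) (b i)) i = 0 := by
    intro T h i
    by_contra ha
    obtain ⟨m, _, h0⟩ := h (b i)
    have h1 := (hA (T : Module.End k V) T.2 i m).2
    rw [h0] at h1
    simp only [map_zero, Finsupp.coe_zero, Pi.zero_apply] at h1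
    exact pow_ne_zero m ha h1.symm
  -- the algebra homomorphism
  let Φ : R →ₐ[k] (ι → k) :=
  { toFun := fun T i => b.repr ((T : Module.End k V) (b i)) i
    map_one' := by funext i; simp
    map_mul' := by
      intro T S
      funext i
      have h := aux_mul b (htri T.1 T.2) (htri S.1 S.2 i)
      simpa [Module.End.mul_apply] using h
    map_zero' := by funext i; simp
    map_add' := by intro T S; funext i; simp
    commutes' := by
      intro c
      funext i
      simp [Algebra.algebraMap_eq_smul_one] }
  -- continuity
  have hcont : @Continuous ↥R (ι → k) inferInstance (discretePiTopology ι k)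
      (fun T : R => fun i => b.repr ((T : Module.End k V) (b i)) i) := by
    letI : TopologicalSpace k := ⊥
    haveI : DiscreteTopology k := ⟨rfl⟩
    letI : TopologicalSpace V := ⊥
    haveI : DiscreteTopology V := ⟨rfl⟩
    refine continuous_pi ?_
    intro i
    have h1 : Continuous fun T : R => (T : Module.End k V) (b i) :=
      (continuous_apply (b i)).comp (continuous_induced_dom.comp continuous_subtype_val)
    exact Continuous.comp (continuous_of_discreteTopology (f := fun v : V => b.repr v i)) h1
  have hkernel : ∀ T : R, Φ T = 0 ↔
      ∀ v : V, ∃ m : ℕ, 0 < m ∧ ((T : Module.End k V) ^ m) v = 0 := by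
    intro T
    constructor
    · intro h v
      exact hker_fwd T (fun i => congrFun h i) v
    · intro h
      funext i
      exact hker_bwd T h i
  have hclosed : IsClosed {T : R | ∀ v : V, ∃ m : ℕ, 0 < m ∧
      ((T : Module.End k V) ^ m) v = 0} := by
    have hset : {T : R | ∀ v : V, ∃ m : ℕ, 0 < m ∧ ((T : Module.End k V) ^ m) v = 0}
        = (fun T : R => fun i => b.repr ((T : Module.End k V) (b i)) i) ⁻¹' {0} := by
      ext T
      simp only [Set.mem_setOf_eq, Set.mem_preimage, Set.mem_singleton_iff]
      constructor
      · intro h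
        funext i
        exact hker_bwd T h i
      · intro h
        exact hker_fwd T (fun i => congrFun h i)
    rw [hset]
    letI : TopologicalSpace k := ⊥
    haveI : DiscreteTopology k := ⟨rfl⟩
    exact @IsClosed.preimage _ _ _ (discretePiTopology ι k) _ hcont {0}
      (@isClosed_singleton _ (discretePiTopology ι k)
        (by unfold discretePiTopology; infer_instance) 0)
  refine ⟨Φ, fun T i => rfl, hcont, hkernel, ?_, hclosed⟩
  intro T S v
  apply hker_fwd (T * S - S * T)
  intro i
  have hm : Φ (T * S - S * T) = 0 := by
    rw [map_sub, map_mul, map_mul, mul_comm (Φ T) (Φ S), sub_self]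
  exact congrFun hm i
end
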